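/- For every finite connected graph G, tl(G) ≤ ts(G) and tb(G) ≤ ⌈ts(G)/2⌉, where ts(G) is the tree-stretch of G. -/

import Mathlib

/-- A tree-decomposition of a graph `G`: a tree `T` on an index type whose nodes carry
bags `X i ⊆ V` covering all vertices and all edges, such that the bags containing any
fixed vertex form a connected subtree of `T` (here: every node on the (unique) path of
`T` between two bags containing `v` also contains `v`). -/
def IsTreeDecomp {V : Type} {ι : Type} (G : SimpleGraph V) (T : SimpleGraph ι)
    (X : ι → Set V) : Prop :=
  T.IsTree ∧
  (∀ v, ∃ i, v ∈ X i) ∧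
  (∀ u v, G.Adj u v → ∃ i, u ∈ X i ∧ v ∈ X i) ∧
  (∀ (v : V) (i j : ι), v ∈ X i → v ∈ X j →
    ∀ p : T.Walk i j, p.IsPath → ∀ k ∈ p.support, v ∈ X k)

/-- The tree-length `tl(G)`: the least `ℓ` such that `G` has a tree-decomposition all
of whose bags have `d_G`-diameter at most `ℓ`. -/
noncomputable def treeLength {V : Type} (G : SimpleGraph V) : ℕ :=
  sInf {ℓ : ℕ | ∃ (ι : Type) (T : SimpleGraph ι) (X : ι → Set V),
    IsTreeDecomp G T X ∧ ∀ i, ∀ u ∈ X i, ∀ v ∈ X i, G.dist u v ≤ ℓ}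

/-- The tree-breadth `tb(G)`: the least `r` such that `G` has a tree-decomposition all
of whose bags are contained in balls of radius `r` of `G`. -/
noncomputable def treeBreadth {V : Type} (G : SimpleGraph V) : ℕ :=
  sInf {r : ℕ | ∃ (ι : Type) (T : SimpleGraph ι) (X : ι → Set V),
    IsTreeDecomp G T X ∧ ∀ i, ∃ c, ∀ u ∈ X i, G.dist u c ≤ r}

/-- The tree-stretch `ts(G)`: the least `t` such that `G` has a spanning tree `T`
(a subgraph of `G` that is a tree) with `d_T(u,v) ≤ t·d_G(u,v)` for all `u, v`. -/
noncomputable def treeStretch {V : Type} (G : SimpleGraph V) : ℕ :=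
  sInf {t : ℕ | ∃ T : SimpleGraph V, T ≤ G ∧ T.IsTree ∧
    ∀ u v, T.dist u v ≤ t * G.dist u v}


open SimpleGraph

section Helpers

variable {V : Type} {T : SimpleGraph V}

private lemma dist_getVert_left (hc : T.Connected) {u v : V} (p : T.Walk u v) (j : ℕ) :
    T.dist u (p.getVert j) ≤ j := by
  induction p generalizing j with
  | nil =>
    rw [SimpleGraph.Walk.getVert_of_length_le _ (by simp)]
    simp [SimpleGraph.dist_self]
  | @cons x y z h q ih =>
    cases j with
    | zero => simp [SimpleGraph.Walk.getVert_zero]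
    | succ j =>
      rw [SimpleGraph.Walk.getVert_cons_succ]
      calc T.dist x (q.getVert j) ≤ T.dist x y + T.dist y (q.getVert j) := hc.dist_triangle
        _ ≤ 1 + j := by
            have h1 : T.dist x y ≤ 1 := by
              simpa using T.dist_le (SimpleGraph.Walk.cons h SimpleGraph.Walk.nil)
            exact Nat.add_le_add h1 (ih j)
        _ = j + 1 := by omega

private lemma dist_getVert_right (hc : T.Connected) {u v : V} (p : T.Walk u v) (j : ℕ) :
    T.dist (p.getVert j) v ≤ p.length - j := by
  induction p generalizing j with
  | nil =>
    rw [SimpleGraph.Walk.getVert_of_length_le _ (by simp)]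
    simp
  | @cons x y z h q ih =>
    cases j with
    | zero =>
      rw [SimpleGraph.Walk.getVert_zero]
      simpa using T.dist_le (SimpleGraph.Walk.cons h q)
    | succ j =>
      rw [SimpleGraph.Walk.getVert_cons_succ]
      have := ih j
      simpa [SimpleGraph.Walk.length_cons, Nat.succ_sub_succ] using this

private lemma dist_add_dist_le_of_mem_support (hc : T.Connected) {u v z : V}
    (p : T.Walk u v) (hz : z ∈ p.support) : T.dist u z + T.dist z v ≤ p.length := by
  obtain ⟨n, hn, hnl⟩ := SimpleGraph.Walk.mem_support_iff_exists_getVert.mp hz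
  subst hn
  have h1 := dist_getVert_left hc p n
  have h2 := dist_getVert_right hc p n
  omega

private lemma mem_geodesics (hT : T.IsTree) {u v1 v2 z : V}
    (p : T.Walk v1 v2) (hp : p.IsPath) (hz : z ∈ p.support)
    (q1 : T.Walk u v1) (q2 : T.Walk u v2) : z ∈ q1.support ∨ z ∈ q2.support := by
  classical
  have hb : (q1.reverse.append q2).bypass.IsPath := SimpleGraph.Walk.bypass_isPath _
  have hpq : p = (q1.reverse.append q2).bypass := (hT.existsUnique_path v1 v2).unique hp hb
  have hz2 : z ∈ (q1.reverse.append q2).support :=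
    SimpleGraph.Walk.support_bypass_subset _ (hpq ▸ hz)
  rw [SimpleGraph.Walk.mem_support_append_iff] at hz2
  rcases hz2 with h | h
  · left
    rwa [SimpleGraph.Walk.support_reverse, List.mem_reverse] at h
  · right; exact h

private lemma dist_le_of_mem_path (hT : T.IsTree) {u v1 v2 z : V} {R : ℕ}
    (p : T.Walk v1 v2) (hp : p.IsPath) (hz : z ∈ p.support) (hz1 : z ≠ v1) (hz2 : z ≠ v2)
    (h1 : T.dist u v1 ≤ R + 1) (h2 : T.dist u v2 ≤ R + 1) : T.dist u z ≤ R := by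
  have hc := hT.isConnected
  obtain ⟨q1, hq1, hl1⟩ := hc.exists_path_of_dist u v1
  obtain ⟨q2, hq2, hl2⟩ := hc.exists_path_of_dist u v2
  rcases mem_geodesics hT p hp hz q1 q2 with h | h
  · have hs := dist_add_dist_le_of_mem_support hc q1 h
    have hpos : 0 < T.dist z v1 := (hc.preconnected z v1).pos_dist_of_ne hz1
    omega
  · have hs := dist_add_dist_le_of_mem_support hc q2 h
    have hpos : 0 < T.dist z v2 := (hc.preconnected z v2).pos_dist_of_ne hz2
    omega

private lemma delete_nonbridge (G : SimpleGraph V) (hconn : G.Connected)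
    (hna : ¬G.IsAcyclic) :
    ∃ (G' : SimpleGraph V) (e : Sym2 V), G' ≤ G ∧ G'.Connected ∧
      G'.edgeSet = G.edgeSet \ {e} ∧ e ∈ G.edgeSet := by
  classical
  rw [isAcyclic_iff_forall_adj_isBridge] at hna
  push_neg at hna
  obtain ⟨v, w, hvw, hbr⟩ := hna
  rw [isBridge_iff] at hbr
  push_neg at hbr
  have hreach : (G \ fromEdgeSet {s(v, w)}).Reachable v w := hbr
  set G' : SimpleGraph V := G \ fromEdgeSet {s(v, w)} with hG'
  have hle : G' ≤ G := sdiff_le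
  have key : ∀ x y, G.Adj x y → G'.Reachable x y := by
    intro x y hxy
    by_cases he : s(x, y) = s(v, w)
    · rcases Sym2.eq_iff.mp he with ⟨rfl, rfl⟩ | ⟨rfl, rfl⟩
      · exact hreach
      · exact hreach.symm
    · refine SimpleGraph.Adj.reachable ?_
      simp only [hG', sdiff_adj, fromEdgeSet_adj, Set.mem_singleton_iff]
      exact ⟨hxy, fun hc => he hc.1⟩
  have hconn' : G'.Connected := by
    rw [connected_iff]
    refine ⟨fun x y => ?_, hconn.nonempty⟩
    obtain ⟨p⟩ := hconn.preconnected x y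
    induction p with
    | nil => exact Reachable.refl _
    | cons h q ih => exact (key _ _ h).trans ih
  refine ⟨G', s(v, w), hle, hconn', ?_, hvw⟩
  rw [hG']
  simp [edgeSet_sdiff, edgeSet_fromEdgeSet, edgeSet_sdiff_sdiff_isDiag]

private lemma exists_spanning_tree_aux :
    ∀ (n : ℕ) (G : SimpleGraph V), G.edgeSet.Finite → G.edgeSet.ncard ≤ n →
      G.Connected → ∃ T ≤ G, T.IsTree := by
  intro n
  induction n with
  | zero =>
    intro G hfin hcard hconn
    by_cases hac : G.IsAcyclic
    · exact ⟨G, le_refl _, ⟨hconn, hac⟩⟩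
    · obtain ⟨G', e, _, _, _, he⟩ := delete_nonbridge G hconn hac
      have : 0 < G.edgeSet.ncard := (Set.ncard_pos hfin).mpr ⟨e, he⟩
      omega
  | succ n ih =>
    intro G hfin hcard hconn
    by_cases hac : G.IsAcyclic
    · exact ⟨G, le_refl _, ⟨hconn, hac⟩⟩
    · obtain ⟨G', e, hle, hconn', hes, he⟩ := delete_nonbridge G hconn hac
      have hfin' : G'.edgeSet.Finite := by rw [hes]; exact hfin.diff
      have hcard' : G'.edgeSet.ncard ≤ n := by
        have hlt : G'.edgeSet.ncard < G.edgeSet.ncard := by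
          rw [hes]; exact Set.ncard_diff_singleton_lt_of_mem he hfin
        omega
      obtain ⟨T, hTle, hT⟩ := ih G' hfin' hcard' hconn'
      exact ⟨T, hTle.trans hle, hT⟩

end Helpers

/-- For every finite connected graph `G`, `tl(G) ≤ ts(G)` and `tb(G) ≤ ⌈ts(G)/2⌉`. -/
theorem treeLength_le_treeStretch_and_treeBreadth_le {V : Type} [Fintype V]
    (G : SimpleGraph V) (hG : G.Connected) :
    treeLength G ≤ treeStretch G ∧ treeBreadth G ≤ (treeStretch G + 1) / 2 := by
  classical
  have hne : {t : ℕ | ∃ T : SimpleGraph V, T ≤ G ∧ T.IsTree ∧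
      ∀ u v, T.dist u v ≤ t * G.dist u v}.Nonempty := by
    obtain ⟨T, hle, hT⟩ := exists_spanning_tree_aux (G.edgeSet.ncard) G (Set.toFinite _) le_rfl hG
    refine ⟨Finset.univ.sup (fun p : V × V => T.dist p.1 p.2), T, hle, hT, fun u v => ?_⟩
    by_cases huv : u = v
    · subst huv; simp [SimpleGraph.dist_self]
    · have h1 : T.dist u v ≤ Finset.univ.sup (fun p : V × V => T.dist p.1 p.2) :=
        Finset.le_sup (f := fun p : V × V => T.dist p.1 p.2) (Finset.mem_univ (u, v))
      have h2 : 0 < G.dist u v := hG.pos_dist_of_ne huv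
      exact le_trans h1 (Nat.le_mul_of_pos_right _ h2)
  have hmem : treeStretch G ∈ {t : ℕ | ∃ T : SimpleGraph V, T ≤ G ∧ T.IsTree ∧
      ∀ u v, T.dist u v ≤ t * G.dist u v} := Nat.sInf_mem hne
  obtain ⟨T, hTG, hTt, hstr⟩ := hmem
  set t := treeStretch G with hts
  have hcon := hTt.isConnected
  have hmono : ∀ u v : V, G.dist u v ≤ T.dist u v := fun u v =>
    SimpleGraph.Reachable.dist_anti hTG (hcon.preconnected u v)
  by_cases ht0 : t = 0
  · have hsub : ∀ u v : V, u = v := by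
      intro u v
      have h := hstr u v
      rw [ht0, Nat.zero_mul, Nat.le_zero] at h
      exact (hcon.dist_eq_zero_iff).mp h
    constructor
    · apply Nat.sInf_le
      refine ⟨V, T, fun _ => Set.univ, ⟨hTt, fun v => ⟨v, trivial⟩,
        fun u v _ => ⟨u, trivial, trivial⟩, fun _ _ _ _ _ _ _ _ _ => trivial⟩, ?_⟩
      intro i u _ v _
      rw [hsub u v, SimpleGraph.dist_self]
      omega
    · apply Nat.sInf_le
      refine ⟨V, T, fun _ => Set.univ, ⟨hTt, fun v => ⟨v, trivial⟩,
        fun u v _ => ⟨u, trivial, trivial⟩, fun _ _ _ _ _ _ _ _ _ => trivial⟩, ?_⟩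
      intro i
      exact ⟨i, fun u _ => by rw [hsub u i, SimpleGraph.dist_self]; omega⟩
  · have ht1 : 1 ≤ t := Nat.one_le_iff_ne_zero.mpr ht0
    set a := t / 2 with ha
    set b := (t - 1) / 2 with hb
    obtain ⟨r⟩ : Nonempty V := hG.nonempty
    choose Q hQp hQl using fun v => hcon.exists_path_of_dist v r
    set par : V → V := fun v => (Q v).getVert 1 with hpar
    have hP1 : ∀ v, par v = v ∨ T.Adj v (par v) := by
      intro v
      by_cases hl : (Q v).length = 0
      · left
        have hv : v = r := SimpleGraph.Walk.eq_of_length_eq_zero hl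
        have hpr : par v = r := SimpleGraph.Walk.getVert_of_length_le _ (by omega)
        rw [hpr, hv]
      · right
        have h0 : (Q v).getVert 0 = v := SimpleGraph.Walk.getVert_zero _
        have hAdj := (Q v).adj_getVert_succ (by omega : 0 < (Q v).length)
        rwa [h0] at hAdj
    have hP1' : ∀ v, T.dist v (par v) ≤ 1 := by
      intro v
      rcases hP1 v with h | h
      · rw [h, SimpleGraph.dist_self]; omega
      · simpa using T.dist_le (SimpleGraph.Walk.cons h SimpleGraph.Walk.nil)
    have hstep : ∀ x y : V, T.Adj x y → T.dist y r = T.dist x r + 1 → par y = x := by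
      intro x y hxy hd
      have hnot : y ∉ (Q x).support := by
        intro hmemy
        have hsum := dist_add_dist_le_of_mem_support hcon (Q x) hmemy
        rw [hQl x] at hsum
        have h1 : 0 < T.dist x y := (hcon.preconnected x y).pos_dist_of_ne hxy.ne
        omega
      have hW : (SimpleGraph.Walk.cons hxy.symm (Q x)).IsPath :=
        (SimpleGraph.Walk.cons_isPath_iff hxy.symm (Q x)).mpr ⟨hQp x, hnot⟩
      have heq : Q y = SimpleGraph.Walk.cons hxy.symm (Q x) :=
        (hTt.existsUnique_path y r).unique (hQp y) hW
      show (Q y).getVert 1 = x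
      rw [heq, SimpleGraph.Walk.getVert_cons_succ, SimpleGraph.Walk.getVert_zero]
    have hP2 : ∀ x y : V, T.Adj x y → par x = y ∨ par y = x := by
      intro x y hxy
      have hd1 : T.dist x y ≤ 1 := by
        simpa using T.dist_le (SimpleGraph.Walk.cons hxy SimpleGraph.Walk.nil)
      have hne' : T.dist x r ≠ T.dist y r := by
        intro hEq
        have hnot : y ∉ (Q x).support := by
          intro hmemy
          have hsum := dist_add_dist_le_of_mem_support hcon (Q x) hmemy
          rw [hQl x] at hsum
          have h1 : 0 < T.dist x y := (hcon.preconnected x y).pos_dist_of_ne hxy.ne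
          omega
        have hW : (SimpleGraph.Walk.cons hxy.symm (Q x)).IsPath :=
          (SimpleGraph.Walk.cons_isPath_iff hxy.symm (Q x)).mpr ⟨hQp x, hnot⟩
        have heq : Q y = SimpleGraph.Walk.cons hxy.symm (Q x) :=
          (hTt.existsUnique_path y r).unique (hQp y) hW
        have hlen := congrArg SimpleGraph.Walk.length heq
        rw [hQl y, SimpleGraph.Walk.length_cons, hQl x] at hlen
        omega
      have htri1 : T.dist x r ≤ T.dist x y + T.dist y r := hcon.dist_triangle
      have htri2 : T.dist y r ≤ T.dist y x + T.dist x r := hcon.dist_triangle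
      rw [SimpleGraph.dist_comm (u := y) (v := x)] at htri2
      have hcases : T.dist y r = T.dist x r + 1 ∨ T.dist x r = T.dist y r + 1 := by omega
      rcases hcases with h | h
      · right; exact hstep x y hxy h
      · left; exact hstep y x hxy.symm h
    set X : V → Set V := fun i => {u | T.dist u i ≤ a ∨ T.dist u (par i) ≤ b} with hXdef
    have hXmem : ∀ i u : V, u ∈ X i ↔ (T.dist u i ≤ a ∨ T.dist u (par i) ≤ b) :=
      fun i u => Iff.rfl
    have hXd : ∀ i u : V, u ∈ X i → T.dist u i ≤ a + 1 := by
      intro i u hu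
      rcases (hXmem i u).mp hu with h | h
      · omega
      · have htri : T.dist u i ≤ T.dist u (par i) + T.dist (par i) i := hcon.dist_triangle
        have hpi : T.dist (par i) i ≤ 1 := by
          rw [SimpleGraph.dist_comm]; exact hP1' i
        omega
    have hdecomp : IsTreeDecomp G T X := by
      refine ⟨hTt, fun v => ⟨v, (hXmem v v).mpr (Or.inl (by rw [SimpleGraph.dist_self]; omega))⟩,
        ?_, ?_⟩
      · -- edge coverage
        intro u w huw
        have hd1 : G.dist u w = 1 := SimpleGraph.dist_eq_one_iff_adj.mpr huw
        have hlt : T.dist u w ≤ t := by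
          have := hstr u w; rw [hd1, Nat.mul_one] at this; exact this
        obtain ⟨q, hqp, hql⟩ := hcon.exists_path_of_dist u w
        by_cases hcase : T.dist u w ≤ 2 * a
        · refine ⟨q.getVert (min a (T.dist u w)), (hXmem _ _).mpr (Or.inl ?_),
            (hXmem _ _).mpr (Or.inl ?_)⟩
          · exact le_trans (dist_getVert_left hcon q _) (min_le_left _ _)
          · have h2 := dist_getVert_right hcon q (min a (T.dist u w))
            rw [hql] at h2
            rw [SimpleGraph.dist_comm]
            omega
        · have hla : T.dist u w = 2 * a + 1 ∧ a = b := by omega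
          have hadj : T.Adj (q.getVert a) (q.getVert (a + 1)) :=
            q.adj_getVert_succ (by omega)
          have hu1 : T.dist u (q.getVert a) ≤ a := dist_getVert_left hcon q a
          have hw1 : T.dist w (q.getVert (a + 1)) ≤ a := by
            have h2 := dist_getVert_right hcon q (a + 1)
            rw [hql] at h2
            rw [SimpleGraph.dist_comm]
            omega
          rcases hP2 _ _ hadj with h | h
          · refine ⟨q.getVert a, (hXmem _ _).mpr (Or.inl hu1),
              (hXmem _ _).mpr (Or.inr ?_)⟩
            rw [h]; omega
          · refine ⟨q.getVert (a + 1), (hXmem _ _).mpr (Or.inr ?_),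
              (hXmem _ _).mpr (Or.inl hw1)⟩
            rw [h]; omega
      · -- convexity
        intro v i j hvi hvj p hp z hz
        by_cases hzi : z = i
        · subst hzi; exact hvi
        by_cases hzj : z = j
        · subst hzj; exact hvj
        refine (hXmem z v).mpr (Or.inl ?_)
        exact dist_le_of_mem_path hTt p hp hz hzi hzj (hXd i v hvi) (hXd j v hvj)
    constructor
    · apply Nat.sInf_le
      refine ⟨V, T, X, hdecomp, ?_⟩
      intro i u hu w hw
      refine le_trans (hmono u w) ?_
      have e1 : T.dist w i = T.dist i w := SimpleGraph.dist_comm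
      have e2 : T.dist w (par i) = T.dist (par i) w := SimpleGraph.dist_comm
      have e3 : T.dist i (par i) = T.dist (par i) i := SimpleGraph.dist_comm
      have hpi : T.dist i (par i) ≤ 1 := hP1' i
      have htriA : T.dist u w ≤ T.dist u i + T.dist i w := hcon.dist_triangle
      have htriB : T.dist u w ≤ T.dist u (par i) + T.dist (par i) w := hcon.dist_triangle
      have htriC : T.dist i w ≤ T.dist i (par i) + T.dist (par i) w := hcon.dist_triangle
      have htriD : T.dist (par i) w ≤ T.dist (par i) i + T.dist i w := hcon.dist_triangle
      rcases (hXmem i u).mp hu with h1 | h1 <;> rcases (hXmem i w).mp hw with h2 | h2 <;> omega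
    · apply Nat.sInf_le
      refine ⟨V, T, X, hdecomp, fun i => ⟨i, fun u hu => ?_⟩⟩
      refine le_trans (hmono u i) ?_
      have := hXd i u hu
      rcases (hXmem i u).mp hu with h | h
      · omega
      · have htri : T.dist u i ≤ T.dist u (par i) + T.dist (par i) i := hcon.dist_triangle
        have hpi : T.dist (par i) i ≤ 1 := by rw [SimpleGraph.dist_comm]; exact hP1' i
        omega
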